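/- Jump law of the co-state for a time-varying switching interface: Let λ₁, λ₂, f₁, f₂, m ∈ ℝⁿ, let L₁, L₂, p₁, p₂, μ, ν ∈ ℝ, and write Δλ = λ₂ − λ₁, Δf = f₂ − f₁, ΔL = L₂ − L₁, ⟨f⟩ = (f₁ + f₂)/2, ⟨λ⟩ = (λ₁ + λ₂)/2. Assume (i) continuity of the augmented Hamiltonian: L₂ + ⟪λ₂, f₂⟫ + p₂ = L₁ + ⟪λ₁, f₁⟫ + p₁, (ii) the augmented co-state jump is parallel to the augmented interface gradient (m, μ): Δλ = ν • m and p₂ − p₁ = ν · μ, and (iii) ⟪m, ⟨f⟩⟫ + μ ≠ 0. Then Δλ = −((ΔL + ⟪⟨λ⟩, Δf⟫) / (⟪m, ⟨f⟩⟫ + μ)) • m. -/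
import Mathlib


open RealInnerProductSpace

/-- Jump law of the co-state for a time-varying switching interface:
Δλ = −((ΔL + ⟪⟨λ⟩, Δf⟫) / (⟪m, ⟨f⟩⟫ + μ)) • m. -/
theorem costate_jump_law_time_varying (n : ℕ)
    (l₁ l₂ f₁ f₂ m : EuclideanSpace ℝ (Fin n)) (L₁ L₂ p₁ p₂ μ ν : ℝ)
    (hH : L₂ + ⟪l₂, f₂⟫ + p₂ = L₁ + ⟪l₁, f₁⟫ + p₁)
    (hpar : l₂ - l₁ = ν • m) (hpar' : p₂ - p₁ = ν * μ)
    (hne : ⟪m, (2 : ℝ)⁻¹ • (f₁ + f₂)⟫ + μ ≠ 0) :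
    l₂ - l₁ =
      (-(((L₂ - L₁) + ⟪(2 : ℝ)⁻¹ • (l₁ + l₂), f₂ - f₁⟫) /
          (⟪m, (2 : ℝ)⁻¹ • (f₁ + f₂)⟫ + μ))) • m := by
  have hl2 : l₂ = l₁ + ν • m := by
    have := hpar; rw [sub_eq_iff_eq_add] at this; rw [this]; abel
  have key : ν * (⟪m, (2 : ℝ)⁻¹ • (f₁ + f₂)⟫ + μ) =
      -(((L₂ - L₁) + ⟪(2 : ℝ)⁻¹ • (l₁ + l₂), f₂ - f₁⟫)) := by
    subst hl2
    simp only [inner_add_left, inner_add_right, inner_sub_left, inner_sub_right,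
      real_inner_smul_left, real_inner_smul_right] at *
    nlinarith [hH, hpar', real_inner_comm m f₁, real_inner_comm m f₂]
  rw [hpar]
  congr 1
  rw [eq_comm, ← neg_div, div_eq_iff hne, ← key]
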